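/- There exists a constant K such that for every k ≥ K and every subgroup H of G = Sym(k) satisfying log|H| ≤ (1/4)·k·log k and |H/H'| ≤ 3^(k/3), one has log|H/H'| ≤ 16 · log|G:H| / log log |G:H|. -/

import Mathlib

open Real

set_option maxHeartbeats 1000000

/-- There exists a constant `K` such that for every `k ≥ K` and every subgroup
`H ≤ G = Sym(k)` satisfying `log₂ |H| ≤ (1/4)·k·log₂ k` and `|H/H'| ≤ 3^(k/3)`,
one has `log₂ |H/H'| ≤ 16 · log₂ |G:H| / log₂ log₂ |G:H|`. -/
theorem small_subgroup_abelianization_bound :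
    ∃ K : ℕ, ∀ (k : ℕ), K ≤ k → ∀ H : Subgroup (Equiv.Perm (Fin k)),
      Real.logb 2 (Nat.card H) ≤ (1 / 4 : ℝ) * k * Real.logb 2 k →
      (Nat.card (Abelianization H) : ℝ) ≤ (3 : ℝ) ^ ((k : ℝ) / 3) →
      Real.logb 2 (Nat.card (Abelianization H)) ≤
        16 * Real.logb 2 (H.index) / Real.logb 2 (Real.logb 2 (H.index)) := by
  use 2 ^ 20
  intro k hk H hH hAb
  have hk0 : 0 < k := lt_of_lt_of_le (by norm_num) hk
  have hkR : (2 : ℝ) ^ (20 : ℕ) ≤ (k : ℝ) := by exact_mod_cast hk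
  have hkR0 : (0 : ℝ) < k := by exact_mod_cast hk0
  set lk := Real.logb 2 k with hlk_def
  have h2 : (1 : ℝ) < 2 := one_lt_two
  have hlk20 : (20 : ℝ) ≤ lk := by
    rw [hlk_def, Real.le_logb_iff_rpow_le h2 hkR0]
    calc (2 : ℝ) ^ (20 : ℝ) = (2 : ℝ) ^ (20 : ℕ) := by
          rw [← Real.rpow_natCast 2 20]; norm_num
      _ ≤ (k : ℝ) := hkR
  -- cardinalities
  have hcard : Nat.card H * H.index = Nat.factorial k := by
    rw [Subgroup.card_mul_index]
    simp [Nat.card_eq_fintype_card, Fintype.card_perm, Fintype.card_fin]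
  have hHpos : 0 < Nat.card H := Nat.card_pos
  have hipos : 0 < H.index := by
    rcases Nat.eq_zero_or_pos H.index with h0 | h1
    · exfalso; rw [h0, mul_zero] at hcard; exact (Nat.factorial_pos k).ne' hcard.symm
    · exact h1
  have hHR : (0 : ℝ) < (Nat.card H : ℝ) := by exact_mod_cast hHpos
  have hiR : (0 : ℝ) < (H.index : ℝ) := by exact_mod_cast hipos
  have hfacR : (0 : ℝ) < (Nat.factorial k : ℝ) := by exact_mod_cast Nat.factorial_pos k
  -- log sum
  have hlogsum : Real.logb 2 (Nat.card H) + Real.logb 2 (H.index)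
      = Real.logb 2 (Nat.factorial k) := by
    rw [← Real.logb_mul hHR.ne' hiR.ne']
    congr 1
    exact_mod_cast congrArg (Nat.cast : ℕ → ℝ) hcard
  -- lower bound on log of factorial :  (k/2) * (lk - 2) ≤ logb 2 k!
  have hfac_lb : (k : ℝ) / 2 * (lk - 2) ≤ Real.logb 2 (Nat.factorial k) := by
    set m := k / 2 with hm_def
    have hmk : m ≤ k := Nat.div_le_self _ _
    have hnat : m ^ (k - m) ≤ Nat.factorial k := by
      calc m ^ (k - m) ≤ Nat.factorial m * m ^ (k - m) :=
            Nat.le_mul_of_pos_left _ (Nat.factorial_pos m)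
        _ ≤ Nat.factorial k := Nat.factorial_mul_pow_sub_le_factorial hmk
    have hm4 : (k : ℝ) / 4 ≤ (m : ℝ) := by
      have : k ≤ 4 * m := by omega
      have := (Nat.cast_le (α := ℝ)).mpr this
      push_cast at this
      linarith
    have hkm : (k : ℝ) / 2 ≤ ((k - m : ℕ) : ℝ) := by
      have : k ≤ 2 * (k - m) := by omega
      have := (Nat.cast_le (α := ℝ)).mpr this
      push_cast at this
      linarith
    have hmpos : (0 : ℝ) < (m : ℝ) := by
      have : 0 < m := by omega
      exact_mod_cast this
    have hlogm : lk - 2 ≤ Real.logb 2 (m : ℝ) := by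
      have h4 : Real.logb 2 ((k : ℝ) / 4) ≤ Real.logb 2 (m : ℝ) :=
        Real.logb_le_logb_of_le h2 (by linarith) hm4
      have hdiv : Real.logb 2 ((k : ℝ) / 4) = lk - 2 := by
        rw [Real.logb_div hkR0.ne' (by norm_num)]
        have h4' : Real.logb 2 (4 : ℝ) = 2 := by
          rw [show (4 : ℝ) = 2 ^ (2 : ℕ) by norm_num, Real.logb_pow,
            Real.logb_self_eq_one (by norm_num)]
          norm_num
        rw [h4']
      linarith
    have hstep : Real.logb 2 ((m : ℝ) ^ (k - m)) ≤ Real.logb 2 (Nat.factorial k) := by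
      apply Real.logb_le_logb_of_le h2 (by positivity)
      calc ((m : ℝ) ^ (k - m)) = ((m ^ (k - m) : ℕ) : ℝ) := by push_cast; ring
        _ ≤ (Nat.factorial k : ℝ) := by exact_mod_cast hnat
    rw [Real.logb_pow] at hstep
    calc (k : ℝ) / 2 * (lk - 2) ≤ ((k - m : ℕ) : ℝ) * Real.logb 2 (m : ℝ) := by
          apply mul_le_mul hkm hlogm (by linarith) (by positivity)
      _ ≤ Real.logb 2 (Nat.factorial k) := hstep
  set L := Real.logb 2 (H.index : ℝ) with hL_def
  -- lower bound on L
  have hL_lb : (k : ℝ) / 8 * lk ≤ L := by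
    have h1 : Real.logb 2 (Nat.factorial k) - (1 / 4 : ℝ) * k * lk ≤ L := by
      rw [hL_def]; linarith [hlogsum, hH]
    have h2' : (k : ℝ) / 2 * (lk - 2) - (1 / 4 : ℝ) * k * lk = (k : ℝ) / 4 * lk - k := by ring
    have h3 : (k : ℝ) / 8 * lk ≤ (k : ℝ) / 4 * lk - k := by
      nlinarith [mul_nonneg (le_of_lt hkR0) (by linarith : (0:ℝ) ≤ lk - 8)]
    linarith
  have hlk_pos : (0 : ℝ) < lk := by linarith
  have hL_pos : (0 : ℝ) < L := by nlinarith
  -- upper bound on L : L ≤ k^2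
  have hlk_le_k : lk ≤ (k : ℝ) := by
    rw [hlk_def, Real.logb_le_iff_le_rpow h2 hkR0]
    calc (k : ℝ) ≤ ((2 ^ k : ℕ) : ℝ) := by exact_mod_cast (Nat.lt_two_pow_self (n := k)).le
      _ = (2 : ℝ) ^ (k : ℝ) := by push_cast; rw [← Real.rpow_natCast 2 k]
  have hL_ub : L ≤ (k : ℝ) ^ 2 := by
    have hile : (H.index : ℝ) ≤ (Nat.factorial k : ℝ) := by
      have : H.index ≤ Nat.factorial k := by
        calc H.index ≤ Nat.card H * H.index := Nat.le_mul_of_pos_left _ hHpos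
          _ = Nat.factorial k := hcard
      exact_mod_cast this
    have h1 : L ≤ Real.logb 2 (Nat.factorial k) :=
      Real.logb_le_logb_of_le h2 hiR hile
    have h2'' : Real.logb 2 (Nat.factorial k) ≤ Real.logb 2 ((k : ℝ) ^ k) := by
      apply Real.logb_le_logb_of_le h2 hfacR
      calc (Nat.factorial k : ℝ) ≤ ((k ^ k : ℕ) : ℝ) := by
            exact_mod_cast Nat.factorial_le_pow k
        _ = (k : ℝ) ^ k := by push_cast; ring
    rw [Real.logb_pow] at h2''
    have : (k : ℝ) * lk ≤ (k : ℝ) ^ 2 := by nlinarith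
    linarith
  -- bounds on logb 2 L
  have hD_lb : (1 : ℝ) ≤ Real.logb 2 L := by
    have hL2 : (2 : ℝ) ≤ L := by nlinarith
    calc (1 : ℝ) = Real.logb 2 (2 : ℝ) := (Real.logb_self_eq_one (by norm_num)).symm
      _ ≤ Real.logb 2 L := Real.logb_le_logb_of_le h2 (by norm_num) hL2
  have hD_pos : (0 : ℝ) < Real.logb 2 L := by linarith
  have hD_ub : Real.logb 2 L ≤ 2 * lk := by
    have h1 : Real.logb 2 L ≤ Real.logb 2 ((k : ℝ) ^ 2) :=
      Real.logb_le_logb_of_le h2 hL_pos hL_ub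
    rw [Real.logb_pow] at h1
    push_cast at h1
    linarith
  -- RHS ≥ k
  have hRHS : (k : ℝ) ≤ 16 * L / Real.logb 2 L := by
    have hstep1 : 16 * L / (2 * lk) ≤ 16 * L / Real.logb 2 L :=
      div_le_div_of_nonneg_left (by positivity) hD_pos hD_ub
    have hstep2 : (k : ℝ) ≤ 16 * L / (2 * lk) := by
      rw [le_div_iff₀ (by positivity)]
      nlinarith
    linarith
  -- LHS ≤ k
  have hAbpos : 0 < Nat.card (Abelianization H) := Nat.card_pos
  have hAbR : (0 : ℝ) < (Nat.card (Abelianization H) : ℝ) := by exact_mod_cast hAbpos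
  have hlog3 : Real.logb 2 (3 : ℝ) ≤ 2 := by
    calc Real.logb 2 (3 : ℝ) ≤ Real.logb 2 (4 : ℝ) :=
          Real.logb_le_logb_of_le h2 (by norm_num) (by norm_num)
      _ = 2 := by
          rw [show (4 : ℝ) = 2 ^ (2 : ℕ) by norm_num, Real.logb_pow,
            Real.logb_self_eq_one (by norm_num)]
          norm_num
  have hLHS : Real.logb 2 (Nat.card (Abelianization H)) ≤ (k : ℝ) := by
    have h1 : Real.logb 2 (Nat.card (Abelianization H))
        ≤ Real.logb 2 ((3 : ℝ) ^ ((k : ℝ) / 3)) :=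
      Real.logb_le_logb_of_le h2 hAbR hAb
    rw [Real.logb_rpow_eq_mul_logb_of_pos (by norm_num)] at h1
    have h2''' : (k : ℝ) / 3 * Real.logb 2 (3 : ℝ) ≤ (k : ℝ) := by
      nlinarith [Real.logb_nonneg h2 (by norm_num : (1:ℝ) ≤ 3)]
    linarith
  linarith
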